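/- Let α > 0 and 0 < c < 1. For every n ∈ ℕ, the n-th moment of the Meixner weight satisfies Σ_{x=0}^∞ x^n·(α)_x·c^x/x! = Σ_{k=0}^n S(n,k)·(α)_k·c^k·(1−c)^{−α−k}, where the series on the left converges absolutely and (1−c)^{−α−k} denotes the real power. -/

import Mathlib

set_option maxHeartbeats 1000000

/-- The Pochhammer symbol (rising factorial) `(a)_x = a (a+1) ⋯ (a+x-1)`. -/
def poch (a : ℝ) (x : ℕ) : ℝ := ∏ i ∈ Finset.range x, (a + i)

/-- The Stirling numbers of the second kind,
`S(n,k) = (1/k!) Σ_{j=0}^k C(k,j) (-1)^{k-j} j^n`. -/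
noncomputable def stirling2 (n k : ℕ) : ℝ :=
  (1 / k.factorial) *
    ∑ j ∈ Finset.range (k + 1), (k.choose j : ℝ) * (-1 : ℝ) ^ (k - j) * (j : ℝ) ^ n

open Filter Topology Set Finset

lemma poch_pos {a : ℝ} (ha : 0 < a) (x : ℕ) : 0 < poch a x :=
  Finset.prod_pos fun i _ => by positivity

lemma poch_succ (a : ℝ) (x : ℕ) : poch a (x + 1) = poch a x * (a + x) :=
  Finset.prod_range_succ _ _

lemma poch_add (a : ℝ) (k x : ℕ) : poch a (k + x) = poch a k * poch (a + k) x := by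
  unfold poch
  rw [Finset.prod_range_add]
  exact congrArg _ (Finset.prod_congr rfl fun i _ => by push_cast; ring)

open Filter Topology in
lemma summable_master {α c : ℝ} (hα : 0 < α) (hc : 0 < c) (hc1 : c < 1) (n : ℕ) :
    Summable (fun m : ℕ => ((m : ℝ) + 1) ^ n * poch α m * c ^ m / m.factorial) := by
  set f : ℕ → ℝ := fun m => ((m : ℝ) + 1) ^ n * poch α m * c ^ m / m.factorial with hf
  have hpos : ∀ m, 0 < f m := fun m => by
    have := poch_pos hα m
    have := m.factorial_pos
    positivity
  apply summable_of_ratio_test_tendsto_lt_one hc1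
    (Eventually.of_forall fun m => (hpos m).ne')
  have key : ∀ m : ℕ, ‖f (m + 1)‖ / ‖f m‖ =
      (1 + 1 / ((m : ℝ) + 1)) ^ n * (1 + (α - 1) * (1 / ((m : ℝ) + 1))) * c := by
    intro m
    rw [Real.norm_eq_abs, Real.norm_eq_abs, abs_of_pos (hpos _), abs_of_pos (hpos _)]
    have hm1 : ((m : ℝ) + 1) ≠ 0 := by positivity
    have hfac : ((m.factorial : ℝ)) ≠ 0 := by exact_mod_cast m.factorial_ne_zero
    have hpo : poch α m ≠ 0 := (poch_pos hα m).ne'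
    have hcp : c ^ m ≠ 0 := (pow_pos hc m).ne'
    simp only [hf, poch_succ, Nat.factorial_succ, Nat.cast_mul, pow_succ, Nat.cast_add,
      Nat.cast_one]
    have h2 : (1 + 1 / ((m : ℝ) + 1)) = ((m : ℝ) + 1 + 1) / ((m : ℝ) + 1) := by
      field_simp
    rw [h2, div_pow]
    field_simp
    ring
  rw [show (𝓝 c) = 𝓝 ((1 + 0 : ℝ) ^ n * (1 + (α - 1) * 0) * c) by norm_num]
  refine Tendsto.congr (fun m => (key m).symm) ?_
  have t0 : Tendsto (fun m : ℕ => 1 / ((m : ℝ) + 1)) atTop (𝓝 0) :=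
    tendsto_one_div_add_atTop_nhds_zero_nat
  exact (((t0.const_add 1).pow n).mul ((t0.const_mul (α - 1)).const_add 1)).mul_const c

lemma binom_tsum {β c : ℝ} (hβ : 0 < β) (hc : 0 ≤ c) (hc1 : c < 1) :
    ∑' x : ℕ, poch β x * c ^ x / x.factorial = (1 - c) ^ (-β) := by
  set r : ℝ := (1 + c) / 2 with hr
  have hcr : c < r := by rw [hr]; linarith
  have hr1 : r < 1 := by rw [hr]; linarith
  have hr0 : 0 < r := by rw [hr]; linarith
  set g : ℕ → ℝ → ℝ := fun x y => poch β x * y ^ x / x.factorial with hgdef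
  set g' : ℕ → ℝ → ℝ := fun x y => poch β x * ((x : ℝ) * y ^ (x - 1)) / x.factorial with hg'def
  set u : ℕ → ℝ := fun x => poch β x * ((x : ℝ) * r ^ (x - 1)) / x.factorial with hudef
  have hupos : ∀ x, 0 ≤ u x := fun x => by
    have := poch_pos hβ x; have := x.factorial_pos; positivity
  -- summability of the bound u
  have hus : Summable u := by
    refine Summable.of_nonneg_of_le hupos (fun x => ?_)
      ((summable_master hβ hr0 hr1 1).mul_left (1 / r))
    rcases x with _ | y
    · have h0 : u 0 = 0 := by simp [hudef]
      rw [h0]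
      have := poch_pos hβ 0
      positivity
    · have hfac : (0:ℝ) < ((y + 1).factorial : ℝ) := by exact_mod_cast (y + 1).factorial_pos
      have hp := (poch_pos hβ (y + 1)).le
      have key : u (y + 1) = ((y:ℝ) + 1) * (poch β (y + 1) * r ^ y / (y + 1).factorial) := by
        simp only [hudef, Nat.add_sub_cancel, Nat.cast_add, Nat.cast_one]
        ring
      have key2 : 1 / r * ((((y + 1 : ℕ) : ℝ) + 1) ^ 1 * poch β (y + 1) * r ^ (y + 1) /
          (y + 1).factorial) = ((y:ℝ) + 2) * (poch β (y + 1) * r ^ y / (y + 1).factorial) := by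
        simp only [pow_one]
        push_cast
        rw [pow_succ]
        field_simp
        ring
      rw [key, key2]
      have hbase : (0:ℝ) ≤ poch β (y + 1) * r ^ y / (y + 1).factorial := by positivity
      have : ((y:ℝ) + 1) ≤ (y:ℝ) + 2 := by linarith
      exact mul_le_mul_of_nonneg_right this hbase
  -- derivatives
  have hg : ∀ x y, HasDerivAt (g x) (g' x y) y := by
    intro x y
    have h := ((hasDerivAt_pow x y).const_mul (poch β x)).div_const (x.factorial : ℝ)
    simpa [hgdef, hg'def] using h
  have hgb : ∀ x y, y ∈ Ioo (-r) r → ‖g' x y‖ ≤ u x := by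
    intro x y hy
    have hyr : |y| ≤ r := by
      rw [abs_le]; exact ⟨hy.1.le, hy.2.le⟩
    simp only [hg'def, hudef, Real.norm_eq_abs]
    rw [abs_div, abs_mul, abs_mul, abs_of_pos (poch_pos hβ x), Nat.abs_cast,
      abs_of_pos (show (0:ℝ) < x.factorial by exact_mod_cast x.factorial_pos)]
    have := poch_pos hβ x
    have hfp : (0:ℝ) < x.factorial := by exact_mod_cast x.factorial_pos
    gcongr
    calc |y ^ (x-1)| = |y| ^ (x-1) := abs_pow y (x-1)
      _ ≤ r ^ (x - 1) := pow_le_pow_left₀ (abs_nonneg y) hyr _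
  -- summability of g at 0
  have hg0 : Summable fun x => g x 0 := by
    apply summable_of_ne_finset_zero (s := {0})
    intro x hx
    simp only [Finset.mem_singleton] at hx
    simp [hgdef, zero_pow hx]
  have h0mem : (0:ℝ) ∈ Ioo (-r) r := by constructor <;> [linarith; linarith]
  set f : ℝ → ℝ := fun y => ∑' x, g x y with hfdef
  have hderiv : ∀ y ∈ Ioo (-r) r, HasDerivAt f (∑' x, g' x y) y := fun y hy =>
    hasDerivAt_tsum_of_isPreconnected hus isOpen_Ioo (convex_Ioo _ _).isPreconnected
      (fun x z _ => hg x z) hgb h0mem hg0 hy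
  have hsumg : ∀ y ∈ Ioo (-r) r, Summable fun x => g x y := fun y hy =>
    summable_of_summable_hasDerivAt_of_isPreconnected hus isOpen_Ioo
      (convex_Ioo _ _).isPreconnected (fun x z _ => hg x z) hgb h0mem hg0 hy
  have hsumg' : ∀ y ∈ Ioo (-r) r, Summable fun x => g' x y := fun y hy =>
    Summable.of_norm_bounded hus (fun x => hgb x y hy)
  -- the ODE: (1 - y) * D = β * f y
  have hODE : ∀ y ∈ Ioo (-r) r, (1 - y) * (∑' x, g' x y) = β * f y := by
    intro y hy
    have hsg := hsumg y hy
    have hsg' := hsumg' y hy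
    have hterm : ∀ x : ℕ, g' (x + 1) y = β * g x y + y * g' x y := by
      intro x
      have e1 : g' (x + 1) y =
          poch β x * (β + x) * (((x:ℝ) + 1) * y ^ x) / (((x:ℝ) + 1) * x.factorial) := by
        simp only [hg'def, Nat.add_sub_cancel, poch_succ, Nat.factorial_succ]
        push_cast; ring
      have e2 : y * g' x y = poch β x * ((x:ℝ) * y ^ x) / x.factorial := by
        simp only [hg'def]
        rcases x with _ | z
        · simp
        · simp only [Nat.add_sub_cancel]
          push_cast
          rw [pow_succ]
          ring
      rw [e1, e2]
      simp only [hgdef]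
      have hfx : ((x.factorial : ℝ)) ≠ 0 := by exact_mod_cast x.factorial_ne_zero
      have hx1 : ((x:ℝ) + 1) ≠ 0 := by positivity
      field_simp
    have hshift : (∑' x, g' x y) = ∑' x, g' (x + 1) y := by
      rw [Summable.tsum_eq_zero_add hsg']
      simp [hg'def]
    have hkey : (∑' x, g' (x + 1) y) = β * f y + y * ∑' x, g' x y := by
      calc ∑' x, g' (x + 1) y = ∑' x, (β * g x y + y * g' x y) := tsum_congr hterm
        _ = β * f y + y * ∑' x, g' x y := by
            rw [Summable.tsum_add (hsg.mul_left β) (hsg'.mul_left y), tsum_mul_left, tsum_mul_left]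
    have hD := hshift.trans hkey
    linear_combination hD
  -- constancy of F y = f y * (1-y)^β on [0, c]
  have hsub : Icc (0:ℝ) c ⊆ Ioo (-r) r := fun y hy =>
    ⟨by linarith [hy.1], by linarith [hy.2]⟩
  set F : ℝ → ℝ := fun y => f y * (1 - y) ^ β with hFdef
  have hFderiv : ∀ y ∈ Ioo (-r) r, HasDerivAt F 0 y := by
    intro y hy
    have h1y : (0:ℝ) < 1 - y := by linarith [hy.2]
    have hrpow : HasDerivAt (fun z : ℝ => (1 - z) ^ β) ((-1) * β * (1 - y) ^ (β - 1)) y :=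
      HasDerivAt.rpow_const ((hasDerivAt_id y).const_sub 1) (Or.inl h1y.ne')
    have hF := (hderiv y hy).mul hrpow
    have hzero : (∑' x, g' x y) * (1 - y) ^ β + f y * ((-1) * β * (1 - y) ^ (β - 1)) = 0 := by
      have hsplit : (1 - y) ^ β = (1 - y) ^ (β - 1) * (1 - y) := by
        rw [← Real.rpow_add_one h1y.ne']
        ring_nf
      rw [hsplit]
      calc (∑' x, g' x y) * ((1 - y) ^ (β - 1) * (1 - y)) + f y * ((-1) * β * (1 - y) ^ (β - 1))
          = (1 - y) ^ (β - 1) * ((1 - y) * ∑' x, g' x y) - (1 - y) ^ (β - 1) * (β * f y) := by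
            ring
        _ = 0 := by rw [hODE y hy]; ring
    rw [← hzero]
    exact hF
  have hconst : F c = F 0 := by
    have hcont : ContinuousOn F (Icc 0 c) := fun y hy =>
      ((hFderiv y (hsub hy)).continuousAt).continuousWithinAt
    have := constant_of_has_deriv_right_zero hcont
      (fun y hy => ((hFderiv y (hsub ⟨hy.1, hy.2.le⟩)).hasDerivWithinAt))
    exact this c (right_mem_Icc.mpr hc)
  have hf0 : f 0 = 1 := by
    show (∑' x, g x 0) = 1
    rw [tsum_eq_single 0 (fun x hx => by simp [hgdef, zero_pow hx])]
    simp [hgdef, poch]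
  have hF0 : F 0 = 1 := by
    show f 0 * (1 - 0 : ℝ) ^ β = 1
    rw [hf0]
    norm_num
  have h1c : (0:ℝ) < 1 - c := by linarith
  have hne : ((1 - c) ^ β : ℝ) ≠ 0 := (Real.rpow_pos_of_pos h1c β).ne'
  have hfc : f c = (1 - c) ^ (-β) := by
    rw [Real.rpow_neg h1c.le, ← one_div, eq_div_iff hne]
    calc f c * (1 - c) ^ β = F c := rfl
      _ = F 0 := hconst
      _ = 1 := hF0
  exact hfc

/-- alternating sum of binomial coefficients over ℝ -/
lemma alt_choose_real (k : ℕ) :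
    ∑ j ∈ range (k + 1), (-1 : ℝ) ^ j * (k.choose j : ℝ)
      = if k = 0 then 1 else 0 := by
  have h := Int.alternating_sum_range_choose (n := k)
  have : ((∑ i ∈ range (k + 1), (-1 : ℤ) ^ i * ↑(k.choose i) : ℤ) : ℝ)
      = ∑ j ∈ range (k + 1), (-1 : ℝ) ^ j * (k.choose j : ℝ) := by
    push_cast; rfl
  rw [← this, h]
  split <;> simp

lemma neg_one_pow_sub {k j : ℕ} (h : j ≤ k) :
    (-1 : ℝ) ^ (k - j) = (-1 : ℝ) ^ k * (-1 : ℝ) ^ j := by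
  have : k = (k - j) + 2 * j - j := by omega
  have h2 : (-1 : ℝ) ^ k * (-1:ℝ)^j = (-1 : ℝ) ^ (k + j) := by rw [pow_add]
  rw [h2, show k + j = (k - j) + 2 * j by omega, pow_add]
  simp [pow_mul]

/-- the inner sum `D(n,k)` vanishes for `k > n` -/
lemma Dzero : ∀ n k : ℕ, n < k →
    (∑ j ∈ range (k + 1), (k.choose j : ℝ) * (-1 : ℝ) ^ (k - j) * (j : ℝ) ^ n) = 0 := by
  intro n
  induction n using Nat.strong_induction_on with
  | _ n IH =>
    intro k hk
    rcases Nat.eq_zero_or_pos n with rfl | hn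
    · -- n = 0
      have hk0 : k ≠ 0 := by omega
      have : ∀ j ∈ range (k + 1), (k.choose j : ℝ) * (-1 : ℝ) ^ (k - j) * (j : ℝ) ^ 0
          = (-1 : ℝ) ^ k * ((-1 : ℝ) ^ j * (k.choose j : ℝ)) := by
        intro j hj
        rw [neg_one_pow_sub (Nat.lt_succ_iff.mp (mem_range.mp hj))]
        ring
      rw [Finset.sum_congr rfl this, ← Finset.mul_sum, alt_choose_real, if_neg hk0, mul_zero]
    · -- n = m + 1
      obtain ⟨m, rfl⟩ := Nat.exists_eq_succ_of_ne_zero hn.ne'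
      obtain ⟨t, rfl⟩ := Nat.exists_eq_succ_of_ne_zero (show k ≠ 0 by omega)
      -- drop the j = 0 term
      rw [Finset.sum_range_succ' _ (t + 1)]
      simp only [Nat.cast_zero, ne_eq, Nat.succ_ne_zero, not_false_eq_true, zero_pow, mul_zero,
        add_zero]
      -- rewrite each term
      have hterm : ∀ j ∈ range (t + 1),
          ((t + 1).choose (j + 1) : ℝ) * (-1 : ℝ) ^ (t - j) * ((j : ℝ) + 1) ^ (m + 1)
          = (t + 1 : ℝ) * ((t.choose j : ℝ) * (-1 : ℝ) ^ (t - j) *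
              ∑ i ∈ range (m + 1), (j : ℝ) ^ i * (m.choose i : ℝ)) := by
        intro j hj
        have hchoose : ((t + 1) : ℕ) * t.choose j = (t + 1).choose (j + 1) * (j + 1) :=
          Nat.add_one_mul_choose_eq t j
        have hc : ((t + 1).choose (j + 1) : ℝ) * ((j : ℝ) + 1) = (t + 1 : ℝ) * t.choose j := by
          have := congrArg (fun z : ℕ => (z : ℝ)) hchoose
          push_cast at this
          linarith [this]
        have hexp : ((j : ℝ) + 1) ^ (m + 1) = ((j : ℝ) + 1) * ((j : ℝ) + 1) ^ m := by
          rw [pow_succ]; ring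
        have hbinom : ((j : ℝ) + 1) ^ m = ∑ i ∈ range (m + 1), (j : ℝ) ^ i * (m.choose i : ℝ) := by
          have := add_pow (j : ℝ) 1 m
          simp only [one_pow, mul_one] at this
          rw [this]
        rw [hexp, hbinom]
        linear_combination ((-1:ℝ)^(t-j) * (∑ i ∈ range (m+1), (j:ℝ)^i * m.choose i)) * hc
      simp only [Nat.succ_eq_add_one]
      push_cast
      rw [Finset.sum_congr rfl hterm, ← Finset.mul_sum]
      have hzero : ∑ j ∈ range (t + 1), ((t.choose j : ℝ) * (-1 : ℝ) ^ (t - j) *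
          ∑ i ∈ range (m + 1), (j : ℝ) ^ i * (m.choose i : ℝ)) = 0 := by
        calc ∑ j ∈ range (t + 1), ((t.choose j : ℝ) * (-1 : ℝ) ^ (t - j) *
                ∑ i ∈ range (m + 1), (j : ℝ) ^ i * (m.choose i : ℝ))
            = ∑ j ∈ range (t + 1), ∑ i ∈ range (m + 1),
                ((t.choose j : ℝ) * (-1 : ℝ) ^ (t - j) * ((j : ℝ) ^ i * (m.choose i : ℝ))) :=
              Finset.sum_congr rfl (fun j _ => Finset.mul_sum _ _ _)
          _ = ∑ i ∈ range (m + 1), ∑ j ∈ range (t + 1),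
                ((t.choose j : ℝ) * (-1 : ℝ) ^ (t - j) * ((j : ℝ) ^ i * (m.choose i : ℝ))) :=
              Finset.sum_comm
          _ = 0 := by
              refine Finset.sum_eq_zero (fun i hi => ?_)
              have him := Finset.mem_range.mp hi
              have hIH := IH i (by omega) t (by omega)
              calc ∑ j ∈ range (t + 1),
                    ((t.choose j : ℝ) * (-1 : ℝ) ^ (t - j) * ((j : ℝ) ^ i * (m.choose i : ℝ)))
                  = (∑ j ∈ range (t + 1),
                      (t.choose j : ℝ) * (-1 : ℝ) ^ (t - j) * (j : ℝ) ^ i) * (m.choose i : ℝ) := by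
                    rw [Finset.sum_mul]
                    exact Finset.sum_congr rfl (fun j _ => by ring)
                _ = 0 := by rw [hIH, zero_mul]
      rw [hzero, mul_zero]

/-- Newton / Stirling expansion: `m^n = Σ_k S(n,k) · m^(k)↓`. -/
lemma newton_stirling (n m : ℕ) :
    ∑ k ∈ range (n + 1), stirling2 n k * (m.descFactorial k : ℝ) = (m : ℝ) ^ n := by
  -- each term rewritten without the 1/k!
  have hterm : ∀ k, stirling2 n k * (m.descFactorial k : ℝ) =
      (∑ j ∈ range (k + 1), (k.choose j : ℝ) * (-1 : ℝ) ^ (k - j) * (j : ℝ) ^ n)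
        * (m.choose k : ℝ) := by
    intro k
    rw [stirling2, Nat.descFactorial_eq_factorial_mul_choose]
    have hk : ((k.factorial : ℝ)) ≠ 0 := by exact_mod_cast k.factorial_ne_zero
    push_cast
    field_simp
  simp only [hterm]
  set T : ℕ → ℝ := fun k => ∑ j ∈ range (k + 1), (k.choose j : ℝ) * (-1 : ℝ) ^ (k - j) * (j : ℝ) ^ n
    with hT
  -- extend/restrict the range to range (m+1)
  have hstep : ∑ k ∈ range (n + 1), T k * (m.choose k : ℝ)
      = ∑ k ∈ range (m + 1), T k * (m.choose k : ℝ) := by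
    have hN : ∀ N, max n m ≤ N → ∑ k ∈ range (n + 1), T k * (m.choose k : ℝ)
        = ∑ k ∈ range (N + 1), T k * (m.choose k : ℝ) := by
      intro N hNle
      refine Finset.sum_subset (by
        intro k hk
        simp only [Finset.mem_range] at *
        omega) ?_
      intro k hk hk2
      simp only [Finset.mem_range] at hk hk2
      have : n < k := by omega
      rw [hT]
      simp only
      rw [Dzero n k this, zero_mul]
    have hM : ∀ N, max n m ≤ N → ∑ k ∈ range (m + 1), T k * (m.choose k : ℝ)
        = ∑ k ∈ range (N + 1), T k * (m.choose k : ℝ) := by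
      intro N hNle
      refine Finset.sum_subset (by
        intro k hk
        simp only [Finset.mem_range] at *
        omega) ?_
      intro k hk hk2
      simp only [Finset.mem_range] at hk hk2
      have : m < k := by omega
      rw [Nat.choose_eq_zero_of_lt this]
      simp
    rw [hN (max n m) le_rfl, hM (max n m) le_rfl]
  rw [hstep]
  -- expand T and swap
  have hswap : ∑ k ∈ range (m + 1), T k * (m.choose k : ℝ)
      = ∑ j ∈ range (m + 1), ∑ k ∈ range (m + 1),
          ((k.choose j : ℝ) * (-1 : ℝ) ^ (k - j) * (j : ℝ) ^ n * (m.choose k : ℝ)) := by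
    rw [← Finset.sum_comm]
    refine Finset.sum_congr rfl (fun k hk => ?_)
    rw [hT]
    simp only
    rw [Finset.sum_mul]
    -- extend inner sum from range (k+1) to range (m+1)
    have hkm := Finset.mem_range.mp hk
    refine Finset.sum_subset (by
      intro j hj
      simp only [Finset.mem_range] at hj ⊢
      omega) ?_
    intro j hj hj2
    simp only [Finset.mem_range] at hj hj2
    rw [Nat.choose_eq_zero_of_lt (by omega : k < j)]
    simp
  rw [hswap]
  -- inner sum over k
  have hinner : ∀ j ∈ range (m + 1), ∑ k ∈ range (m + 1),
      ((k.choose j : ℝ) * (-1 : ℝ) ^ (k - j) * (j : ℝ) ^ n * (m.choose k : ℝ))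
      = (if j = m then (m : ℝ) ^ n else 0) := by
    intro j hj
    have hjm : j ≤ m := Nat.lt_succ_iff.mp (Finset.mem_range.mp hj)
    -- restrict to k ∈ Icc j m
    have h1 : ∑ k ∈ range (m + 1),
        ((k.choose j : ℝ) * (-1 : ℝ) ^ (k - j) * (j : ℝ) ^ n * (m.choose k : ℝ))
        = ∑ k ∈ Finset.Ico j (m + 1),
          ((k.choose j : ℝ) * (-1 : ℝ) ^ (k - j) * (j : ℝ) ^ n * (m.choose k : ℝ)) := by
      refine (Finset.sum_subset (by
        intro k hk
        simp only [Finset.mem_Ico, Finset.mem_range] at *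
        omega) ?_).symm
      intro k hk hk2
      simp only [Finset.mem_Ico, Finset.mem_range] at hk hk2
      rw [Nat.choose_eq_zero_of_lt (by omega : k < j)]
      simp
    rw [h1, Finset.sum_Ico_eq_sum_range]
    have h2 : ∀ i ∈ range (m + 1 - j),
        (((j + i).choose j : ℝ) * (-1 : ℝ) ^ (j + i - j) * (j : ℝ) ^ n * (m.choose (j + i) : ℝ))
        = (m.choose j : ℝ) * (j : ℝ) ^ n * ((-1 : ℝ) ^ i * ((m - j).choose i : ℝ)) := by
      intro i hi
      have hi' : j + i ≤ m := by
        have := Finset.mem_range.mp hi; omega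
      have hcm : m.choose (j + i) * (j + i).choose j = m.choose j * (m - j).choose (j + i - j) :=
        Nat.choose_mul (n := m) (Nat.le_add_right j i)
      have hsub : j + i - j = i := by omega
      rw [hsub] at hcm ⊢
      have hcmr : ((m.choose (j + i) : ℝ)) * ((j + i).choose j : ℝ)
          = (m.choose j : ℝ) * ((m - j).choose i : ℝ) := by exact_mod_cast hcm
      linear_combination ((-1:ℝ)^i * (j:ℝ)^n) * hcmr
    rw [Finset.sum_congr rfl h2, ← Finset.mul_sum,
      show m + 1 - j = m - j + 1 by omega, alt_choose_real (m - j)]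
    rcases eq_or_ne j m with rfl | hne
    · simp
    · rw [if_neg (by omega), if_neg hne, mul_zero]
  rw [Finset.sum_congr rfl hinner, Finset.sum_ite_eq' (range (m + 1)) m (fun _ => (m:ℝ)^n),
    if_pos (Finset.self_mem_range_succ m)]

/-- The moments of the Meixner weight:
`Σ_x x^n (α)_x c^x/x! = Σ_{k=0}^n S(n,k) (α)_k c^k (1-c)^{-α-k}`. -/
theorem meixner_moments (α c : ℝ) (hα : 0 < α) (hc : 0 < c) (hc1 : c < 1) (n : ℕ) :
    Summable (fun x : ℕ => |(x : ℝ) ^ n * poch α x * c ^ x / x.factorial|) ∧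
    ∑' x : ℕ, (x : ℝ) ^ n * poch α x * c ^ x / x.factorial =
      ∑ k ∈ Finset.range (n + 1),
        stirling2 n k * poch α k * c ^ k * (1 - c) ^ (-α - (k : ℝ)) := by
  have hfacpos : ∀ m : ℕ, (0:ℝ) < m.factorial := fun m => by exact_mod_cast m.factorial_pos
  -- bound by the master series
  have hdesc_sum : ∀ k ≤ n, Summable
      (fun m : ℕ => (m.descFactorial k : ℝ) * poch α m * c ^ m / m.factorial) := by
    intro k hk
    refine Summable.of_nonneg_of_le (fun m => ?_) (fun m => ?_) (summable_master hα hc hc1 n)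
    · have := poch_pos hα m; have := hfacpos m; positivity
    · have hb : (m.descFactorial k : ℝ) ≤ ((m : ℝ) + 1) ^ n := by
        calc (m.descFactorial k : ℝ) ≤ ((m : ℕ) ^ k : ℕ) := by
              exact_mod_cast m.descFactorial_le_pow k
          _ = ((m : ℝ)) ^ k := by push_cast; rfl
          _ ≤ ((m : ℝ) + 1) ^ k := by
              apply pow_le_pow_left₀ (by positivity) (by linarith)
          _ ≤ ((m : ℝ) + 1) ^ n := by
              apply pow_le_pow_right₀
                (by have : (0:ℝ) ≤ (m:ℝ) := Nat.cast_nonneg m; linarith) hk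
      have hpos : (0:ℝ) ≤ poch α m * c ^ m / m.factorial := by
        have := poch_pos hα m; have := hfacpos m; positivity
      calc (m.descFactorial k : ℝ) * poch α m * c ^ m / m.factorial
          = (m.descFactorial k : ℝ) * (poch α m * c ^ m / m.factorial) := by ring
        _ ≤ ((m : ℝ) + 1) ^ n * (poch α m * c ^ m / m.factorial) :=
            mul_le_mul_of_nonneg_right hb hpos
        _ = ((m : ℝ) + 1) ^ n * poch α m * c ^ m / m.factorial := by ring
  have hsum1 : Summable (fun x : ℕ => |(x : ℝ) ^ n * poch α x * c ^ x / x.factorial|) := by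
    refine Summable.of_nonneg_of_le (fun m => abs_nonneg _) (fun m => ?_)
      (summable_master hα hc hc1 n)
    have h1 : (0:ℝ) ≤ (m : ℝ) ^ n * poch α m * c ^ m / m.factorial := by
      have := poch_pos hα m; have := hfacpos m; positivity
    rw [abs_of_nonneg h1]
    have hpos : (0:ℝ) ≤ poch α m * c ^ m / m.factorial := by
      have := poch_pos hα m; have := hfacpos m; positivity
    calc (m : ℝ) ^ n * poch α m * c ^ m / m.factorial
        = (m : ℝ) ^ n * (poch α m * c ^ m / m.factorial) := by ring
      _ ≤ ((m : ℝ) + 1) ^ n * (poch α m * c ^ m / m.factorial) := by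
          refine mul_le_mul_of_nonneg_right
            (pow_le_pow_left₀ (by positivity) (by linarith) n) hpos
      _ = ((m : ℝ) + 1) ^ n * poch α m * c ^ m / m.factorial := by ring
  refine ⟨hsum1, ?_⟩
  -- the k-th summand of the RHS as a tsum
  have hterm : ∀ k ≤ n, stirling2 n k * poch α k * c ^ k * (1 - c) ^ (-α - (k : ℝ))
      = ∑' m : ℕ, stirling2 n k *
          ((m.descFactorial k : ℝ) * poch α m * c ^ m / m.factorial) := by
    intro k hk
    have hβ : 0 < α + k := by positivity
    have hbin := binom_tsum hβ hc.le hc1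
    have hexp : -α - (k : ℝ) = -(α + k) := by ring
    rw [hexp, ← hbin, ← tsum_mul_left]
    -- now reindex the RHS tsum
    set h : ℕ → ℝ := fun m => stirling2 n k *
      ((m.descFactorial k : ℝ) * poch α m * c ^ m / m.factorial) with hh
    have hinj : Function.Injective (fun x : ℕ => k + x) := fun a b hab => by
      simp only [] at hab; omega
    have hsupp : Function.support h ⊆ Set.range (fun x : ℕ => k + x) := by
      intro m hm
      rcases le_or_gt k m with h1 | h1
      · exact ⟨m - k, by show k + (m - k) = m; omega⟩
      · exfalso
        apply hm
        rw [hh]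
        simp [Nat.descFactorial_eq_zero_iff_lt.mpr h1]
    have := hinj.tsum_eq hsupp
    rw [← this]
    refine tsum_congr (fun x => ?_)
    rw [hh]
    simp only
    have hdf : ((x.factorial : ℝ)) * ((k + x).descFactorial k : ℝ) = ((k + x).factorial : ℝ) := by
      have := Nat.factorial_mul_descFactorial (Nat.le_add_right k x)
      rw [show k + x - k = x by omega] at this
      exact_mod_cast this
    have hxf : ((x.factorial : ℝ)) ≠ 0 := (hfacpos x).ne'
    have hkxf : (((k + x).factorial : ℝ)) ≠ 0 := (hfacpos (k + x)).ne'
    rw [poch_add α k x, pow_add]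
    field_simp
    linear_combination (-(stirling2 n k * poch α k * poch (α + k) x)) * hdf
  -- sum over k and swap with the tsum
  have hsum2 : ∀ k ∈ Finset.range (n + 1), Summable (fun m : ℕ => stirling2 n k *
      ((m.descFactorial k : ℝ) * poch α m * c ^ m / m.factorial)) := fun k hk =>
    (hdesc_sum k (Nat.lt_succ_iff.mp (Finset.mem_range.mp hk))).mul_left _
  calc ∑' x : ℕ, (x : ℝ) ^ n * poch α x * c ^ x / x.factorial
      = ∑' m : ℕ, ∑ k ∈ Finset.range (n + 1), stirling2 n k *
          ((m.descFactorial k : ℝ) * poch α m * c ^ m / m.factorial) := by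
        refine tsum_congr (fun m => ?_)
        calc (m : ℝ) ^ n * poch α m * c ^ m / m.factorial
            = (∑ k ∈ Finset.range (n + 1), stirling2 n k * (m.descFactorial k : ℝ)) *
                (poch α m * c ^ m / m.factorial) := by rw [newton_stirling n m]; ring
          _ = ∑ k ∈ Finset.range (n + 1), stirling2 n k *
                ((m.descFactorial k : ℝ) * poch α m * c ^ m / m.factorial) := by
              rw [Finset.sum_mul]
              exact Finset.sum_congr rfl (fun k _ => by ring)
    _ = ∑ k ∈ Finset.range (n + 1), ∑' m : ℕ, stirling2 n k *
          ((m.descFactorial k : ℝ) * poch α m * c ^ m / m.factorial) := Summable.tsum_finsetSum hsum2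
    _ = ∑ k ∈ Finset.range (n + 1),
          stirling2 n k * poch α k * c ^ k * (1 - c) ^ (-α - (k : ℝ)) := by
        refine Finset.sum_congr rfl (fun k hk => ?_)
        exact (hterm k (Nat.lt_succ_iff.mp (Finset.mem_range.mp hk))).symm
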